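/- arXiv:1210.1438 — 3 statements merged into one kernel-verified Lean document; each statement's English description precedes it below -/
import Mathlib

section
/- Let J be a B(H)-ideal and let S ∈ J with S ≠ 0. Then (S)_J = F(H) if and only if S has finite rank (i.e., S ∈ F(H)). -/
open scoped BigOperators
open TopologicalSpace

variable {H : Type*} [NormedAddCommGroup H] [InnerProductSpace ℂ H] [CompleteSpace H]

/-- `J` is a two-sided ideal of `B(H)`: an additive subgroup closed under left and
right multiplication by arbitrary bounded operators. -/
def IsBHIdeal (J : Set (H →L[ℂ] H)) : Prop :=
  (0 : H →L[ℂ] H) ∈ J ∧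
  (∀ x ∈ J, ∀ y ∈ J, x + y ∈ J) ∧
  (∀ x ∈ J, -x ∈ J) ∧
  ∀ (A : H →L[ℂ] H), ∀ x ∈ J, A * x ∈ J ∧ x * A ∈ J

/-- `I` is a `J`-ideal: an additive subgroup of `B(H)` contained in `J` and closed
under left and right multiplication by elements of `J`. -/
def IsSubideal (J I : Set (H →L[ℂ] H)) : Prop :=
  I ⊆ J ∧ (0 : H →L[ℂ] H) ∈ I ∧
  (∀ x ∈ I, ∀ y ∈ I, x + y ∈ I) ∧
  (∀ x ∈ I, -x ∈ I) ∧
  ∀ A ∈ J, ∀ x ∈ I, A * x ∈ I ∧ x * A ∈ I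

/-- A linear `J`-ideal: a `J`-ideal closed under multiplication by complex scalars. -/
def IsLinearSubideal (J I : Set (H →L[ℂ] H)) : Prop :=
  IsSubideal J I ∧ ∀ (c : ℂ), ∀ x ∈ I, c • x ∈ I

/-- A real linear `J`-ideal: a `J`-ideal closed under multiplication by real scalars. -/
def IsRealSubideal (J I : Set (H →L[ℂ] H)) : Prop :=
  IsSubideal J I ∧ ∀ (r : ℝ), ∀ x ∈ I, r • x ∈ I

/-- `(𝒮)`: the smallest two-sided ideal of `B(H)` containing `𝒮`. -/
def genBH (𝒮 : Set (H →L[ℂ] H)) : Set (H →L[ℂ] H) :=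
  ⋂₀ {I | IsBHIdeal I ∧ 𝒮 ⊆ I}

/-- `⟨𝒮⟩_J`: the smallest `J`-ideal containing `𝒮`. -/
def genSub (J 𝒮 : Set (H →L[ℂ] H)) : Set (H →L[ℂ] H) :=
  ⋂₀ {I | IsSubideal J I ∧ 𝒮 ⊆ I}

/-- `(𝒮)_J`: the smallest linear `J`-ideal containing `𝒮`. -/
def genLin (J 𝒮 : Set (H →L[ℂ] H)) : Set (H →L[ℂ] H) :=
  ⋂₀ {I | IsLinearSubideal J I ∧ 𝒮 ⊆ I}

/-- `(𝒮)_J^ℝ`: the smallest real linear `J`-ideal containing `𝒮`. -/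
def genReal (J 𝒮 : Set (H →L[ℂ] H)) : Set (H →L[ℂ] H) :=
  ⋂₀ {I | IsRealSubideal J I ∧ 𝒮 ⊆ I}

/-- `J(𝒮)`: all finite sums `Σ Aᵢ Xᵢ` with `Aᵢ ∈ J` and `Xᵢ ∈ (𝒮)`. -/
def JGen (J 𝒮 : Set (H →L[ℂ] H)) : Set (H →L[ℂ] H) :=
  {T | ∃ (n : ℕ) (A X : Fin n → (H →L[ℂ] H)),
    (∀ i, A i ∈ J ∧ X i ∈ genBH 𝒮) ∧ T = ∑ i, A i * X i}

/-- `J(𝒮)J`: all finite sums `Σ Aᵢ Xᵢ Bᵢ` with `Aᵢ, Bᵢ ∈ J` and `Xᵢ ∈ (𝒮)`. -/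
def JGenJ (J 𝒮 : Set (H →L[ℂ] H)) : Set (H →L[ℂ] H) :=
  {T | ∃ (n : ℕ) (A X B : Fin n → (H →L[ℂ] H)),
    (∀ i, A i ∈ J ∧ X i ∈ genBH 𝒮 ∧ B i ∈ J) ∧ T = ∑ i, A i * X i * B i}

/-- `JS + SJ + J(S)J = {AS + SB + Y : A, B ∈ J, Y ∈ J(S)J}`. -/
def JSplus (J : Set (H →L[ℂ] H)) (S : H →L[ℂ] H) : Set (H →L[ℂ] H) :=
  {T | ∃ A ∈ J, ∃ B ∈ J, ∃ Y ∈ JGenJ J {S}, T = A * S + S * B + Y}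

/-- `K(H)`: the compact operators on `H`. -/
def KH : Set (H →L[ℂ] H) := {T | IsCompactOperator ⇑T}

/-- `T` is a finite-rank operator: its range is finite-dimensional. -/
def IsFiniteRank (T : H →L[ℂ] H) : Prop :=
  FiniteDimensional ℂ (LinearMap.range (T : H →ₗ[ℂ] H))


set_option linter.unusedSectionVars false
set_option synthInstance.maxHeartbeats 400000
set_option maxHeartbeats 1000000

noncomputable def rankOne' (v w : H) : H →L[ℂ] H := (innerSL ℂ v).smulRight w

lemma rankOne'_apply (v w x : H) : rankOne' v w x = (inner ℂ v x : ℂ) • w := rfl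

lemma isFiniteRank_of_le' {T : H →L[ℂ] H} (N : Submodule ℂ H) (hN : FiniteDimensional ℂ N)
    (h : LinearMap.range (T : H →ₗ[ℂ] H) ≤ N) : IsFiniteRank T :=
  Submodule.finiteDimensional_of_le h

lemma isFiniteRank_zero' : IsFiniteRank (0 : H →L[ℂ] H) := by
  unfold IsFiniteRank
  rw [show ((0 : H →L[ℂ] H) : H →ₗ[ℂ] H) = 0 from rfl, LinearMap.range_zero]
  infer_instance

lemma isFiniteRank_add' {T U : H →L[ℂ] H} (hT : IsFiniteRank T) (hU : IsFiniteRank U) :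
    IsFiniteRank (T + U) := by
  haveI : FiniteDimensional ℂ (LinearMap.range (T : H →ₗ[ℂ] H)) := hT
  haveI : FiniteDimensional ℂ (LinearMap.range (U : H →ₗ[ℂ] H)) := hU
  refine isFiniteRank_of_le' (LinearMap.range (T : H →ₗ[ℂ] H) ⊔ LinearMap.range (U : H →ₗ[ℂ] H))
    inferInstance ?_
  rintro y ⟨x, rfl⟩
  exact Submodule.add_mem_sup (LinearMap.mem_range_self _ x) (LinearMap.mem_range_self _ x)

lemma isFiniteRank_neg' {T : H →L[ℂ] H} (hT : IsFiniteRank T) : IsFiniteRank (-T) := by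
  haveI : FiniteDimensional ℂ (LinearMap.range (T : H →ₗ[ℂ] H)) := hT
  refine isFiniteRank_of_le' (LinearMap.range (T : H →ₗ[ℂ] H)) inferInstance ?_
  rintro y ⟨x, rfl⟩
  exact ⟨-x, by simp⟩

lemma isFiniteRank_smul' (c : ℂ) {T : H →L[ℂ] H} (hT : IsFiniteRank T) :
    IsFiniteRank (c • T) := by
  haveI : FiniteDimensional ℂ (LinearMap.range (T : H →ₗ[ℂ] H)) := hT
  refine isFiniteRank_of_le' (LinearMap.range (T : H →ₗ[ℂ] H)) inferInstance ?_
  rintro y ⟨x, rfl⟩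
  exact ⟨c • x, by simp⟩

lemma isFiniteRank_mul_left' (A : H →L[ℂ] H) {T : H →L[ℂ] H} (hT : IsFiniteRank T) :
    IsFiniteRank (A * T) := by
  haveI : FiniteDimensional ℂ (LinearMap.range (T : H →ₗ[ℂ] H)) := hT
  have heq : LinearMap.range ((A * T : H →L[ℂ] H) : H →ₗ[ℂ] H)
      = (LinearMap.range (T : H →ₗ[ℂ] H)).map (A : H →ₗ[ℂ] H) := by
    rw [← LinearMap.range_comp]; rfl
  unfold IsFiniteRank
  rw [heq]
  infer_instance

lemma isFiniteRank_mul_right' (A : H →L[ℂ] H) {T : H →L[ℂ] H} (hT : IsFiniteRank T) :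
    IsFiniteRank (T * A) := by
  haveI : FiniteDimensional ℂ (LinearMap.range (T : H →ₗ[ℂ] H)) := hT
  refine isFiniteRank_of_le' (LinearMap.range (T : H →ₗ[ℂ] H)) inferInstance ?_
  rintro y ⟨x, rfl⟩
  exact ⟨A x, rfl⟩

lemma isFiniteRank_rankOne' (v w : H) : IsFiniteRank (rankOne' v w) := by
  refine isFiniteRank_of_le' (Submodule.span ℂ {w}) inferInstance ?_
  rintro y ⟨x, rfl⟩
  exact Submodule.smul_mem _ _ (Submodule.mem_span_singleton_self w)

lemma rankOne'_factor (S : H →L[ℂ] H) (hS0 : S ≠ 0) (v w : H) :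
    ∃ A B : H →L[ℂ] H, IsFiniteRank A ∧ IsFiniteRank B ∧ rankOne' v w = A * S * B := by
  obtain ⟨u, hu⟩ : ∃ u, S u ≠ 0 := by
    by_contra h; push_neg at h; exact hS0 (by ext x; simpa using h x)
  refine ⟨((‖S u‖:ℂ)^2)⁻¹ • rankOne' (S u) w, rankOne' v u,
    isFiniteRank_smul' _ (isFiniteRank_rankOne' _ _), isFiniteRank_rankOne' _ _, ?_⟩
  have hne : ((‖S u‖:ℂ))^2 ≠ 0 := by simpa using norm_ne_zero_iff.2 hu
  ext x
  simp only [ContinuousLinearMap.mul_apply, rankOne'_apply, ContinuousLinearMap.smul_apply,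
    map_smul, inner_smul_right, inner_self_eq_norm_sq_to_K]
  rw [smul_smul, smul_smul]
  congr 1
  field_simp
  exact (mul_div_cancel_right₀ _ hne).symm

lemma finrank_decomp' (T : H →L[ℂ] H) (hT : IsFiniteRank T) :
    ∃ (n : ℕ) (v w : Fin n → H), T = ∑ i, rankOne' (v i) (w i) := by
  haveI : FiniteDimensional ℂ (LinearMap.range (T : H →ₗ[ℂ] H)) := hT
  set R := LinearMap.range (T : H →ₗ[ℂ] H) with hR
  set n := Module.finrank ℂ R with hn
  let b : OrthonormalBasis (Fin n) ℂ R := stdOrthonormalBasis ℂ R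
  refine ⟨n, fun i => ContinuousLinearMap.adjoint T (b i : H), fun i => (b i : H), ?_⟩
  ext x
  have hmem : T x ∈ R := LinearMap.mem_range_self _ x
  have hrepr := b.sum_repr (⟨T x, hmem⟩ : R)
  simp_rw [b.repr_apply_apply, Submodule.coe_inner] at hrepr
  have h2 := congrArg (Subtype.val) hrepr
  push_cast at h2
  simp only [ContinuousLinearMap.sum_apply, rankOne'_apply,
    ContinuousLinearMap.adjoint_inner_left]
  exact h2.symm

lemma sum_mem_aux (I : Set (H →L[ℂ] H)) (h0 : (0 : H →L[ℂ] H) ∈ I)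
    (hadd : ∀ x ∈ I, ∀ y ∈ I, x + y ∈ I) {n : ℕ} (f : Fin n → (H →L[ℂ] H))
    (hf : ∀ i, f i ∈ I) : ∑ i, f i ∈ I :=
  Finset.sum_induction f (· ∈ I) (fun a b ha hb => hadd a ha b hb) h0 (fun i _ => hf i)


/-- for `0 ≠ S ∈ J`, `(S)_J = F(H)` iff `S` has finite rank. -/
theorem stmt_12 [SeparableSpace H] (hinf : ¬ FiniteDimensional ℂ H)
    (J : Set (H →L[ℂ] H)) (hJ : IsBHIdeal J)
    (S : H →L[ℂ] H) (hS : S ∈ J) (hS0 : S ≠ 0) :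
    genLin J {S} = {T : H →L[ℂ] H | IsFiniteRank T} ↔ IsFiniteRank S := by
  constructor
  · intro h
    have hSm : S ∈ genLin J {S} :=
      Set.mem_sInter.2 fun I hI => hI.2 rfl
    rw [h] at hSm
    exact hSm
  · intro hSfr
    have hFRJ : ∀ T : H →L[ℂ] H, IsFiniteRank T → T ∈ J := by
      intro T hT
      obtain ⟨n, v, w, rfl⟩ := finrank_decomp' T hT
      refine sum_mem_aux J hJ.1 hJ.2.1 _ fun i => ?_
      obtain ⟨A, B, _, _, hAB⟩ := rankOne'_factor S hS0 (v i) (w i)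
      rw [hAB]
      exact (hJ.2.2.2 B _ (hJ.2.2.2 A S hS).1).2
    have hFRlin : IsLinearSubideal J {T : H →L[ℂ] H | IsFiniteRank T} :=
      ⟨⟨fun T hT => hFRJ T hT, isFiniteRank_zero', fun x hx y hy => isFiniteRank_add' hx hy,
        fun x hx => isFiniteRank_neg' hx, fun A _ x hx =>
          ⟨isFiniteRank_mul_left' A hx, isFiniteRank_mul_right' A hx⟩⟩,
        fun c x hx => isFiniteRank_smul' c hx⟩
    apply Set.Subset.antisymm
    · exact Set.sInter_subset_of_mem ⟨hFRlin, Set.singleton_subset_iff.2 hSfr⟩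
    · intro T hT
      refine Set.mem_sInter.2 fun I hI => ?_
      obtain ⟨⟨hIJ, hI0, hIadd, hIneg, hImul⟩, hIsmul⟩ := hI.1
      have hSI : S ∈ I := hI.2 rfl
      obtain ⟨n, v, w, rfl⟩ := finrank_decomp' T hT
      refine sum_mem_aux I hI0 hIadd _ fun i => ?_
      obtain ⟨A, B, hAfr, hBfr, hAB⟩ := rankOne'_factor S hS0 (v i) (w i)
      rw [hAB]
      exact (hImul B (hFRJ B hBfr) _ (hImul A (hFRJ A hAfr) S hSI).1).2
end

section
/- Let J be a B(H)-ideal and S ∈ J. Then every linear J-ideal I with JS + SJ + J(S)J ⊆ I ⊆ (S)_J satisfies I = JS + SJ + J(S)J or I = (S)_J; likewise every real linear J-ideal I with JS + SJ + J(S)J ⊆ I ⊆ (S)_J^ℝ satisfies I = JS + SJ + J(S)J or I = (S)_J^ℝ. That is, JS + SJ + J(S)J is a maximal linear J-ideal in (S)_J and a maximal real linear J-ideal in (S)_J^ℝ. -/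
open scoped BigOperators
open TopologicalSpace

variable {H : Type*} [NormedAddCommGroup H] [InnerProductSpace ℂ H] [CompleteSpace H]

set_option linter.unusedSectionVars false
set_option maxHeartbeats 1000000

/- ------------------- auxiliary development ------------------- -/

lemma my_sum_mem {I : Set (H →L[ℂ] H)} (h0 : (0:H →L[ℂ] H) ∈ I)
    (hadd : ∀ x ∈ I, ∀ y ∈ I, x + y ∈ I) {n : ℕ} (f : Fin n → (H →L[ℂ] H))
    (hf : ∀ i, f i ∈ I) : ∑ i, f i ∈ I :=
  Finset.sum_induction f (· ∈ I) (fun a b ha hb => hadd a ha b hb) h0 (fun i _ => hf i)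

lemma my_smul_mem_BH {J : Set (H →L[ℂ] H)} (hJ : IsBHIdeal J) (c : ℂ)
    {x : H →L[ℂ] H} (hx : x ∈ J) : c • x ∈ J := by
  simpa [smul_mul_assoc] using (hJ.2.2.2 (c • (1 : H →L[ℂ] H)) x hx).1

/-- the principal ideal generated by `S`, explicitly. -/
def PrincSet (S : H →L[ℂ] H) : Set (H →L[ℂ] H) :=
  {T | ∃ (n : ℕ) (C D : Fin n → (H →L[ℂ] H)), T = ∑ i, C i * S * D i}

lemma PrincSet_isBHIdeal (S : H →L[ℂ] H) : IsBHIdeal (PrincSet S) := by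
  refine ⟨⟨0, ![], ![], by simp⟩, ?_, ?_, ?_⟩
  · rintro x ⟨n, C, D, rfl⟩ y ⟨m, C', D', rfl⟩
    refine ⟨n + m, Fin.append C C', Fin.append D D', ?_⟩
    rw [Fin.sum_univ_add]
    simp [Fin.append_left, Fin.append_right]
  · rintro x ⟨n, C, D, rfl⟩
    exact ⟨n, fun i => -(C i), D, by simp [Finset.sum_neg_distrib]⟩
  · intro A x hx
    obtain ⟨n, C, D, rfl⟩ := hx
    constructor
    · exact ⟨n, fun i => A * C i, D, by rw [Finset.mul_sum]; simp [mul_assoc]⟩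
    · exact ⟨n, C, fun i => D i * A, by rw [Finset.sum_mul]; simp [mul_assoc]⟩

lemma genBH_singleton (S : H →L[ℂ] H) : genBH {S} = PrincSet S := by
  apply Set.Subset.antisymm
  · exact Set.sInter_subset_of_mem ⟨PrincSet_isBHIdeal S,
      by rintro x rfl; exact ⟨1, ![1], ![1], by simp⟩⟩
  · rintro x ⟨n, C, D, rfl⟩ I ⟨hI, hSI⟩
    refine my_sum_mem hI.1 hI.2.1 _ (fun i => ?_)
    exact (hI.2.2.2 (D i) _ (hI.2.2.2 (C i) S (hSI rfl)).1).2

section main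
variable {J : Set (H →L[ℂ] H)} {S : H →L[ℂ] H}

lemma JGenJ_zero : (0 : H →L[ℂ] H) ∈ JGenJ J {S} :=
  ⟨0, ![], ![], ![], fun i => i.elim0, by simp⟩

lemma JGenJ_single (hJ : IsBHIdeal J) {A B : H →L[ℂ] H} (hA : A ∈ J) (hB : B ∈ J)
    {X : H →L[ℂ] H} (hX : X ∈ genBH {S}) : A * X * B ∈ JGenJ J {S} :=
  ⟨1, ![A], ![X], ![B], fun i => by fin_cases i <;> exact ⟨hA, hX, hB⟩, by simp⟩

lemma JGenJ_add {x y : H →L[ℂ] H} (hx : x ∈ JGenJ J {S}) (hy : y ∈ JGenJ J {S}) :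
    x + y ∈ JGenJ J {S} := by
  obtain ⟨n, A, X, B, h1, rfl⟩ := hx
  obtain ⟨m, A', X', B', h2, rfl⟩ := hy
  refine ⟨n + m, Fin.append A A', Fin.append X X', Fin.append B B', ?_, ?_⟩
  · intro i
    refine Fin.addCases (fun j => ?_) (fun j => ?_) i
    · simpa [Fin.append_left] using h1 j
    · simpa [Fin.append_right] using h2 j
  · rw [Fin.sum_univ_add]
    simp [Fin.append_left, Fin.append_right]

lemma JGenJ_neg {x : H →L[ℂ] H} (hx : x ∈ JGenJ J {S}) (hJ : IsBHIdeal J) :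
    -x ∈ JGenJ J {S} := by
  obtain ⟨n, A, X, B, h1, rfl⟩ := hx
  exact ⟨n, fun i => -(A i), X, B,
    fun i => ⟨hJ.2.2.1 _ (h1 i).1, (h1 i).2⟩, by simp [Finset.sum_neg_distrib]⟩

lemma JGenJ_smul (hJ : IsBHIdeal J) (c : ℂ) {x : H →L[ℂ] H} (hx : x ∈ JGenJ J {S}) :
    c • x ∈ JGenJ J {S} := by
  obtain ⟨n, A, X, B, h1, rfl⟩ := hx
  exact ⟨n, fun i => c • A i, X, B,
    fun i => ⟨my_smul_mem_BH hJ c (h1 i).1, (h1 i).2⟩,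
    by rw [Finset.smul_sum]; simp [smul_mul_assoc]⟩

lemma JGenJ_mul_left (hJ : IsBHIdeal J) (A' : H →L[ℂ] H) {x : H →L[ℂ] H}
    (hx : x ∈ JGenJ J {S}) : A' * x ∈ JGenJ J {S} := by
  obtain ⟨n, A, X, B, h1, rfl⟩ := hx
  exact ⟨n, fun i => A' * A i, X, B,
    fun i => ⟨(hJ.2.2.2 A' _ (h1 i).1).1, (h1 i).2⟩,
    by rw [Finset.mul_sum]; simp [mul_assoc]⟩

lemma JGenJ_mul_right (hJ : IsBHIdeal J) (A' : H →L[ℂ] H) {x : H →L[ℂ] H}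
    (hx : x ∈ JGenJ J {S}) : x * A' ∈ JGenJ J {S} := by
  obtain ⟨n, A, X, B, h1, rfl⟩ := hx
  exact ⟨n, A, X, fun i => B i * A',
    fun i => ⟨(h1 i).1, (h1 i).2.1, (hJ.2.2.2 A' _ (h1 i).2.2).2⟩,
    by rw [Finset.sum_mul]; simp [mul_assoc]⟩

lemma JGenJ_subset_J (hJ : IsBHIdeal J) : JGenJ J {S} ⊆ J := by
  rintro x ⟨n, A, X, B, h1, rfl⟩
  refine my_sum_mem hJ.1 hJ.2.1 _ (fun i => ?_)
  exact (hJ.2.2.2 (B i) _ (hJ.2.2.2 (X i) (A i) (h1 i).1).2).2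

/- ---- JSplus closure properties ---- -/

lemma JSplus_zero (hJ : IsBHIdeal J) : (0 : H →L[ℂ] H) ∈ JSplus J S :=
  ⟨0, hJ.1, 0, hJ.1, 0, JGenJ_zero, by simp⟩

lemma JSplus_add (hJ : IsBHIdeal J) {x y : H →L[ℂ] H}
    (hx : x ∈ JSplus J S) (hy : y ∈ JSplus J S) : x + y ∈ JSplus J S := by
  obtain ⟨A, hA, B, hB, Y, hY, rfl⟩ := hx
  obtain ⟨A', hA', B', hB', Y', hY', rfl⟩ := hy
  exact ⟨A + A', hJ.2.1 _ hA _ hA', B + B', hJ.2.1 _ hB _ hB', Y + Y',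
    JGenJ_add hY hY', by noncomm_ring⟩

lemma JSplus_neg (hJ : IsBHIdeal J) {x : H →L[ℂ] H} (hx : x ∈ JSplus J S) :
    -x ∈ JSplus J S := by
  obtain ⟨A, hA, B, hB, Y, hY, rfl⟩ := hx
  exact ⟨-A, hJ.2.2.1 _ hA, -B, hJ.2.2.1 _ hB, -Y, JGenJ_neg hY hJ, by noncomm_ring⟩

lemma JSplus_smul (hJ : IsBHIdeal J) (c : ℂ) {x : H →L[ℂ] H} (hx : x ∈ JSplus J S) :
    c • x ∈ JSplus J S := by
  obtain ⟨A, hA, B, hB, Y, hY, rfl⟩ := hx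
  exact ⟨c • A, my_smul_mem_BH hJ c hA, c • B, my_smul_mem_BH hJ c hB, c • Y,
    JGenJ_smul hJ c hY, by simp [smul_add, smul_mul_assoc, mul_smul_comm]⟩

lemma S_mem_genBH : S ∈ genBH ({S} : Set (H →L[ℂ] H)) := fun I hI => hI.2 rfl

lemma JSplus_mul_left (hJ : IsBHIdeal J) (hS : S ∈ J) {A' : H →L[ℂ] H} (hA' : A' ∈ J)
    {x : H →L[ℂ] H} (hx : x ∈ JSplus J S) : A' * x ∈ JSplus J S := by
  obtain ⟨A, hA, B, hB, Y, hY, rfl⟩ := hx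
  refine ⟨A' * A, (hJ.2.2.2 A' A hA).1, 0, hJ.1, A' * S * B + A' * Y,
    JGenJ_add (JGenJ_single hJ hA' hB S_mem_genBH) (JGenJ_mul_left hJ A' hY), ?_⟩
  noncomm_ring

lemma JSplus_mul_right (hJ : IsBHIdeal J) (hS : S ∈ J) {A' : H →L[ℂ] H} (hA' : A' ∈ J)
    {x : H →L[ℂ] H} (hx : x ∈ JSplus J S) : x * A' ∈ JSplus J S := by
  obtain ⟨A, hA, B, hB, Y, hY, rfl⟩ := hx
  refine ⟨0, hJ.1, B * A', (hJ.2.2.2 A' B hB).2, A * S * A' + Y * A',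
    JGenJ_add (JGenJ_single hJ hA hA' S_mem_genBH) (JGenJ_mul_right hJ A' hY), ?_⟩
  noncomm_ring

lemma JSplus_subset_J (hJ : IsBHIdeal J) (hS : S ∈ J) : JSplus J S ⊆ J := by
  rintro x ⟨A, hA, B, hB, Y, hY, rfl⟩
  exact hJ.2.1 _ (hJ.2.1 _ (hJ.2.2.2 S A hA).2 _ (hJ.2.2.2 B S hS).2) _
    (JGenJ_subset_J hJ hY)

/-- `JSplus` is contained in any subideal containing `S`. -/
lemma JSplus_subset (hJ : IsBHIdeal J) {I : Set (H →L[ℂ] H)}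
    (hI : IsSubideal J I) (hSI : S ∈ I) : JSplus J S ⊆ I := by
  rintro x ⟨A, hA, B, hB, Y, hY, rfl⟩
  obtain ⟨n, A', X, B', h1, rfl⟩ := hY
  refine hI.2.2.1 _ (hI.2.2.1 _ (hI.2.2.2.2 A hA S hSI).1 _ (hI.2.2.2.2 B hB S hSI).2)
    _ (my_sum_mem hI.2.1 hI.2.2.1 _ (fun i => ?_))
  have hX := (h1 i).2.1
  rw [genBH_singleton] at hX
  obtain ⟨m, C, D, hXeq⟩ := hX
  have : A' i * X i * B' i = ∑ j, (A' i * C j) * S * (D j * B' i) := by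
    rw [hXeq, Finset.mul_sum, Finset.sum_mul]
    simp [mul_assoc]
  rw [this]
  refine my_sum_mem hI.2.1 hI.2.2.1 _ (fun j => ?_)
  have hAC : A' i * C j ∈ J := (hJ.2.2.2 (C j) _ (h1 i).1).2
  have hDB : D j * B' i ∈ J := (hJ.2.2.2 (D j) _ (h1 i).2.2).1
  exact (hI.2.2.2.2 _ hDB _ (hI.2.2.2.2 _ hAC S hSI).1).2

/- ---- characterizations of genLin and genReal ---- -/

lemma ESet_isLinear (hJ : IsBHIdeal J) (hS : S ∈ J) :
    IsLinearSubideal J {x | ∃ c : ℂ, ∃ T ∈ JSplus J S, x = c • S + T} := by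
  constructor
  · refine ⟨?_, ⟨0, 0, JSplus_zero hJ, by simp⟩, ?_, ?_, ?_⟩
    · rintro x ⟨c, T, hT, rfl⟩
      exact hJ.2.1 _ (my_smul_mem_BH hJ c hS) _ (JSplus_subset_J hJ hS hT)
    · rintro x ⟨c, T, hT, rfl⟩ y ⟨c', T', hT', rfl⟩
      exact ⟨c + c', T + T', JSplus_add hJ hT hT', by module⟩
    · rintro x ⟨c, T, hT, rfl⟩
      exact ⟨-c, -T, JSplus_neg hJ hT, by module⟩
    · rintro A hA x ⟨c, T, hT, rfl⟩
      constructor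
      · refine ⟨0, A * (c • S + T), ?_, by simp⟩
        have h1 : A * (c • S) ∈ JSplus J S :=
          ⟨c • A, my_smul_mem_BH hJ c hA, 0, hJ.1, 0, JGenJ_zero,
            by simp [mul_smul_comm, smul_mul_assoc]⟩
        simpa [mul_add] using JSplus_add hJ h1 (JSplus_mul_left hJ hS hA hT)
      · refine ⟨0, (c • S + T) * A, ?_, by simp⟩
        have h1 : (c • S) * A ∈ JSplus J S :=
          ⟨0, hJ.1, c • A, my_smul_mem_BH hJ c hA, 0, JGenJ_zero,
            by simp [mul_smul_comm, smul_mul_assoc]⟩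
        simpa [add_mul] using JSplus_add hJ h1 (JSplus_mul_right hJ hS hA hT)
  · rintro c x ⟨c', T, hT, rfl⟩
    exact ⟨c * c', c • T, JSplus_smul hJ c hT, by module⟩

lemma genLin_eq (hJ : IsBHIdeal J) (hS : S ∈ J) :
    genLin J {S} = {x | ∃ c : ℂ, ∃ T ∈ JSplus J S, x = c • S + T} := by
  apply Set.Subset.antisymm
  · exact Set.sInter_subset_of_mem ⟨ESet_isLinear hJ hS,
      by rintro x rfl; exact ⟨1, 0, JSplus_zero hJ, by simp⟩⟩
  · rintro x ⟨c, T, hT, rfl⟩ I ⟨hI, hSI⟩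
    have hSI' : S ∈ I := hSI rfl
    exact hI.1.2.2.1 _ (hI.2 c S hSI') _ (JSplus_subset hJ hI.1 hSI' hT)

lemma ESet_isReal (hJ : IsBHIdeal J) (hS : S ∈ J) :
    IsRealSubideal J {x | ∃ r : ℝ, ∃ T ∈ JSplus J S, x = r • S + T} := by
  constructor
  · refine ⟨?_, ⟨0, 0, JSplus_zero hJ, by simp⟩, ?_, ?_, ?_⟩
    · rintro x ⟨r, T, hT, rfl⟩
      rw [← Complex.coe_smul]
      exact hJ.2.1 _ (my_smul_mem_BH hJ r hS) _ (JSplus_subset_J hJ hS hT)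
    · rintro x ⟨r, T, hT, rfl⟩ y ⟨r', T', hT', rfl⟩
      exact ⟨r + r', T + T', JSplus_add hJ hT hT', by module⟩
    · rintro x ⟨r, T, hT, rfl⟩
      exact ⟨-r, -T, JSplus_neg hJ hT, by module⟩
    · rintro A hA x ⟨r, T, hT, rfl⟩
      constructor
      · refine ⟨0, A * (r • S + T), ?_, by simp⟩
        have h1 : A * (r • S) ∈ JSplus J S := by
          rw [← Complex.coe_smul]
          exact ⟨(r : ℂ) • A, my_smul_mem_BH hJ r hA, 0, hJ.1, 0, JGenJ_zero,
            by simp [mul_smul_comm, smul_mul_assoc]⟩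
        simpa [mul_add] using JSplus_add hJ h1 (JSplus_mul_left hJ hS hA hT)
      · refine ⟨0, (r • S + T) * A, ?_, by simp⟩
        have h1 : (r • S) * A ∈ JSplus J S := by
          rw [← Complex.coe_smul]
          exact ⟨0, hJ.1, (r : ℂ) • A, my_smul_mem_BH hJ r hA, 0, JGenJ_zero,
            by simp [mul_smul_comm, smul_mul_assoc]⟩
        simpa [add_mul] using JSplus_add hJ h1 (JSplus_mul_right hJ hS hA hT)
  · rintro r x ⟨r', T, hT, rfl⟩
    refine ⟨r * r', r • T, ?_, by module⟩
    rw [← Complex.coe_smul]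
    exact JSplus_smul hJ _ hT

lemma genReal_eq (hJ : IsBHIdeal J) (hS : S ∈ J) :
    genReal J {S} = {x | ∃ r : ℝ, ∃ T ∈ JSplus J S, x = r • S + T} := by
  apply Set.Subset.antisymm
  · exact Set.sInter_subset_of_mem ⟨ESet_isReal hJ hS,
      by rintro x rfl; exact ⟨1, 0, JSplus_zero hJ, by simp⟩⟩
  · rintro x ⟨r, T, hT, rfl⟩ I ⟨hI, hSI⟩
    have hSI' : S ∈ I := hSI rfl
    exact hI.1.2.2.1 _ (hI.2 r S hSI') _ (JSplus_subset hJ hI.1 hSI' hT)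

end main

/-- `JS + SJ + J(S)J` is a maximal linear `J`-ideal in `(S)_J` and a
maximal real linear `J`-ideal in `(S)_J^ℝ`. -/
theorem stmt_14 (J : Set (H →L[ℂ] H)) (hJ : IsBHIdeal J)
    (S : H →L[ℂ] H) (hS : S ∈ J) :
    (∀ I, IsLinearSubideal J I → JSplus J S ⊆ I → I ⊆ genLin J {S} →
      I = JSplus J S ∨ I = genLin J {S}) ∧
    (∀ I, IsRealSubideal J I → JSplus J S ⊆ I → I ⊆ genReal J {S} →
      I = JSplus J S ∨ I = genReal J {S}) := by
  constructor
  · intro I hI hlo hhi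
    by_cases hE : I = JSplus J S
    · exact Or.inl hE
    right
    obtain ⟨x, hxI, hxJS⟩ : ∃ x ∈ I, x ∉ JSplus J S := by
      by_contra h
      push_neg at h
      exact hE (Set.Subset.antisymm h hlo)
    have hx' := hhi hxI
    rw [genLin_eq hJ hS] at hx'
    obtain ⟨c, T, hT, rfl⟩ := hx'
    have hc : c ≠ 0 := by rintro rfl; simp at hxJS; exact hxJS hT
    have hSI : S ∈ I := by
      have h1 : c • S + T + -T ∈ I := hI.1.2.2.1 _ hxI _ (hI.1.2.2.2.1 _ (hlo hT))
      have h2 : c⁻¹ • (c • S + T + -T) ∈ I := hI.2 _ _ h1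
      have : c⁻¹ • (c • S + T + -T) = S := by
        rw [add_neg_cancel_right, smul_smul, inv_mul_cancel₀ hc, one_smul]
      rwa [this] at h2
    refine Set.Subset.antisymm hhi ?_
    exact Set.sInter_subset_of_mem ⟨hI, by rintro y rfl; exact hSI⟩
  · intro I hI hlo hhi
    by_cases hE : I = JSplus J S
    · exact Or.inl hE
    right
    obtain ⟨x, hxI, hxJS⟩ : ∃ x ∈ I, x ∉ JSplus J S := by
      by_contra h
      push_neg at h
      exact hE (Set.Subset.antisymm h hlo)
    have hx' := hhi hxI
    rw [genReal_eq hJ hS] at hx'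
    obtain ⟨r, T, hT, rfl⟩ := hx'
    have hr : r ≠ 0 := by rintro rfl; simp at hxJS; exact hxJS hT
    have hSI : S ∈ I := by
      have h1 : r • S + T + -T ∈ I := hI.1.2.2.1 _ hxI _ (hI.1.2.2.2.1 _ (hlo hT))
      have h2 : r⁻¹ • (r • S + T + -T) ∈ I := hI.2 _ _ h1
      have : r⁻¹ • (r • S + T + -T) = S := by
        rw [add_neg_cancel_right, smul_smul, inv_mul_cancel₀ hr, one_smul]
      rwa [this] at h2
    refine Set.Subset.antisymm hhi ?_
    exact Set.sInter_subset_of_mem ⟨hI, by rintro y rfl; exact hSI⟩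
end

section
/- Let J be a B(H)-ideal and let 𝒮 = {S₁, …, S_N} ⊆ J be a finite set. If ⟨𝒮⟩_J = (𝒮)_J^ℝ or ⟨𝒮⟩_J = (𝒮)_J, then (𝒮) is J-soft, i.e., (𝒮) = J(𝒮). -/
open scoped BigOperators
open TopologicalSpace

variable {H : Type*} [NormedAddCommGroup H] [InnerProductSpace ℂ H] [CompleteSpace H]

set_option maxHeartbeats 1000000
set_option synthInstance.maxHeartbeats 1000000
set_option linter.unusedSectionVars false
set_option linter.unusedVariables false

section AuxPolar
open ContinuousLinearMap

local notation "⟪" x ", " y "⟫" => @inner ℂ _ _ x y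

theorem exists_polar (T : H →L[ℂ] H) : ∃ U : H →L[ℂ] H, T = U * star T * U := by
  classical
  have h0 : (0:H→L[ℂ] H) ≤ star T * T := star_mul_self_nonneg T
  set P := CFC.sqrt (star T * T) with hPdef
  have hPnn : 0 ≤ P := CFC.sqrt_nonneg _
  have hPP : P * P = star T * T := CFC.sqrt_mul_sqrt_self _ h0
  have hPsa : IsSelfAdjoint P := IsSelfAdjoint.of_nonneg hPnn
  have hPadj : adjoint P = P := hPsa.adjoint_eq
  -- norm equality
  have hinner : ∀ x y : H, ⟪P x, P y⟫ = ⟪T x, T y⟫ := by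
    intro x y
    have : ⟪P x, P y⟫ = ⟪x, (P * P) y⟫ := by
      rw [ContinuousLinearMap.mul_apply, ← adjoint_inner_right, hPadj]
    rw [this, hPP, ContinuousLinearMap.mul_apply, star_eq_adjoint, adjoint_inner_right]
  have hnorm : ∀ x : H, ‖P x‖ = ‖T x‖ := by
    intro x
    have := hinner x x
    rw [inner_self_eq_norm_sq_to_K, inner_self_eq_norm_sq_to_K] at this
    have h2 : (‖P x‖:ℝ)^2 = (‖T x‖:ℝ)^2 := by exact_mod_cast this
    nlinarith [norm_nonneg (P x), norm_nonneg (T x)]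
  -- the closed subspace K = closure of range P
  set Pl := (P : H →ₗ[ℂ] H) with hPl
  set R : Submodule ℂ H := LinearMap.range Pl with hR
  set K : Submodule ℂ H := R.topologicalClosure with hK
  haveI : CompleteSpace K := (Submodule.isClosed_topologicalClosure R).completeSpace_coe
  -- V₀ : R →L[ℂ] H
  have hker : LinearMap.ker Pl ≤ LinearMap.ker (T : H →ₗ[ℂ] H) := by
    intro x hx
    have hx' : P x = 0 := hx
    have : ‖T x‖ = 0 := by rw [← hnorm, hx', norm_zero]
    simpa [LinearMap.mem_ker] using norm_eq_zero.mp this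
  set V₀ : R →ₗ[ℂ] H :=
    ((LinearMap.ker Pl).liftQ (T : H →ₗ[ℂ] H) hker).comp
      Pl.quotKerEquivRange.symm.toLinearMap with hV₀
  have hV₀eval : ∀ (x : H) (hx : Pl x ∈ R), V₀ ⟨Pl x, hx⟩ = T x := by
    intro x hx
    have h1 : Pl.quotKerEquivRange.symm ⟨Pl x, hx⟩
        = (LinearMap.ker Pl).mkQ x := LinearMap.quotKerEquivRange_symm_apply_image Pl x _
    simp only [hV₀, LinearMap.comp_apply, LinearEquiv.coe_toLinearMap, h1]
    simp [Submodule.liftQ_apply]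
  have hV₀norm : ∀ y : R, ‖V₀ y‖ = ‖y‖ := by
    rintro ⟨y, hy⟩
    obtain ⟨x, rfl⟩ := hy
    refine (congrArg norm (hV₀eval x _)).trans ?_
    exact (hnorm x).symm
  set V₀L : R →L[ℂ] H := LinearMap.mkContinuous V₀ 1 (by
    intro y; rw [hV₀norm y, one_mul]) with hV₀L
  -- inclusion e : R →L K
  set einc : R →ₗ[ℂ] K := Submodule.inclusion (R.le_topologicalClosure) with heinc
  set e : R →L[ℂ] K := LinearMap.mkContinuous einc 1 (by
    intro y; rw [one_mul]; exact le_of_eq rfl) with he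
  have henorm : ∀ y : R, ‖e y‖ = ‖y‖ := fun y => rfl
  have h_e : Isometry e := AddMonoidHomClass.isometry_of_norm e henorm
  have h_dense : DenseRange e := by
    intro k
    rw [closure_subtype]
    have himg : (↑) '' (Set.range e) = (R : Set H) := by
      ext z
      constructor
      · rintro ⟨w, ⟨y, rfl⟩, rfl⟩
        exact y.2
      · rintro hz
        exact ⟨e ⟨z, hz⟩, ⟨⟨z, hz⟩, rfl⟩, rfl⟩
    rw [himg]
    rw [← Submodule.topologicalClosure_coe R]
    exact k.2
  -- the extension U₁ : K →L[ℂ] H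
  set U₁ : K →L[ℂ] H := V₀L.extend e with hU₁
  have hU₁e : ∀ y : R, U₁ (e y) = V₀L y := fun y =>
    ContinuousLinearMap.extend_eq V₀L h_dense h_e.isUniformInducing y
  -- U := U₁ ∘ orthogonal projection
  set prK : H →L[ℂ] K := K.orthogonalProjectionOnto with hprK
  set U : H →L[ℂ] H := U₁.comp prK with hU
  -- (L1) U ∘ P = T
  have hL1 : ∀ x : H, U (P x) = T x := by
    intro x
    have hmem : P x ∈ K := R.le_topologicalClosure (LinearMap.mem_range_self Pl x)
    have hproj : prK (P x) = ⟨P x, hmem⟩ := by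
      rw [hprK]
      exact Submodule.orthogonalProjectionOnto_mem_subspace_eq_self (⟨P x, hmem⟩ : K)
    have : (⟨P x, hmem⟩ : K) = e ⟨Pl x, LinearMap.mem_range_self Pl x⟩ := rfl
    rw [hU, ContinuousLinearMap.comp_apply, hproj, this, hU₁e]
    exact hV₀eval x _
  have hTUP : T = U.comp P := by
    ext x; exact (hL1 x).symm
  -- (L2) U₁ preserves inner products on K
  have hU₁inner : ∀ a b : K, ⟪U₁ a, U₁ b⟫ = ⟪(a : H), (b : H)⟫ := by
    have hcl : IsClosed {p : K × K | ⟪U₁ p.1, U₁ p.2⟫ = ⟪(p.1 : H), (p.2 : H)⟫} := by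
      apply isClosed_eq
      · exact Continuous.inner (U₁.continuous.comp continuous_fst)
          (U₁.continuous.comp continuous_snd)
      · exact Continuous.inner (continuous_subtype_val.comp continuous_fst)
          (continuous_subtype_val.comp continuous_snd)
    intro a b
    refine DenseRange.induction_on₂ h_dense hcl ?_ a b
    rintro ⟨y, hy⟩ ⟨z, hz⟩
    obtain ⟨x, rfl⟩ := hy
    obtain ⟨x', rfl⟩ := hz
    show ⟪U₁ (e ⟨Pl x, _⟩), U₁ (e ⟨Pl x', _⟩)⟫ = _
    rw [hU₁e, hU₁e]
    show ⟪V₀ ⟨Pl x, _⟩, V₀ ⟨Pl x', _⟩⟫ = _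
    refine (congrArg₂ (fun a b : H => ⟪a, b⟫) (hV₀eval x _) (hV₀eval x' _)).trans ?_
    exact (hinner x x').symm
  -- (L3) adjoint U ∘ U = projection onto K
  have hL3 : ∀ x : H, adjoint U (U x) = (prK x : H) := by
    intro x
    apply ext_inner_right ℂ
    intro v
    rw [adjoint_inner_left]
    show ⟪U x, U v⟫ = _
    rw [hU, ContinuousLinearMap.comp_apply, ContinuousLinearMap.comp_apply]
    rw [hU₁inner]
    have hperp : v - (prK v : H) ∈ Kᗮ := K.sub_starProjection_mem_orthogonal v
    have : ⟪(prK x : H), v - (prK v : H)⟫ = 0 :=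
      Submodule.inner_right_of_mem_orthogonal (prK x).2 hperp
    rw [inner_sub_right] at this
    linear_combination (norm := module) -this
  -- (L4) P kills K-orthogonal
  have hL4 : ∀ z : H, z ∈ Kᗮ → P z = 0 := by
    intro z hz
    have hzR : z ∈ Rᗮ := Submodule.orthogonal_le R.le_topologicalClosure hz
    have : ⟪P z, P z⟫ = 0 := by
      rw [← adjoint_inner_right, hPadj]
      exact (Submodule.mem_orthogonal' R z).mp hzR _ (LinearMap.mem_range_self Pl (P z))
    simpa using inner_self_eq_zero.mp this
  -- conclude
  refine ⟨U, ?_⟩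
  ext x
  rw [ContinuousLinearMap.mul_apply, ContinuousLinearMap.mul_apply, star_eq_adjoint, hTUP, adjoint_comp, hPadj]
  show U.comp P x = U (P ((adjoint U) (U x)))
  rw [ContinuousLinearMap.comp_apply, hL3 x]
  have : P ((prK x : H)) = P x := by
    have hsub : P ((prK x : H)) - P x = P ((prK x : H) - x) := by
      rw [map_sub]
    have hmem : (prK x : H) - x ∈ Kᗮ := by
      have : x - (prK x : H) ∈ Kᗮ := K.sub_starProjection_mem_orthogonal x
      simpa using Kᗮ.neg_mem this
    have := hL4 _ hmem
    rw [this] at hsub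
    exact sub_eq_zero.mp hsub
  show U (P x) = U (P ↑(prK x))
  exact congrArg U this.symm


end AuxPolar

theorem div_fg_zero {R M : Type*} [CommRing R] [IsDomain R] [IsPrincipalIdealRing R]
    [AddCommGroup M] [Module R M] [Module.Finite R M]
    (hR : ∀ c : R, (∀ r : R, r ≠ 0 → r ∣ c) → c = 0)
    (x : M) (hx : ∀ r : R, r ≠ 0 → ∃ y : M, r • y = x) : x = 0 := by
  classical
  haveI : Module.Finite R (M ⧸ Submodule.torsion R M) := Module.Finite.quotient R _
  haveI : NoZeroSMulDivisors R (M ⧸ Submodule.torsion R M) :=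
    ⟨fun {c x} h => Module.isTorsionFree_iff_smul_eq_zero.mp Submodule.QuotientTorsion.instIsTorsionFree c x h⟩
  haveI : Module.Free R (M ⧸ Submodule.torsion R M) := Module.free_of_finite_type_torsion_free'
  -- image of x in the free quotient is zero
  have hxQ : Submodule.Quotient.mk (p := Submodule.torsion R M) x = 0 := by
    set b := Module.Free.chooseBasis R (M ⧸ Submodule.torsion R M) with hb
    have hcoord : ∀ i, b.repr (Submodule.Quotient.mk (p := Submodule.torsion R M) x) i = 0 := by
      intro i
      apply hR
      intro r hr
      obtain ⟨y, hy⟩ := hx r hr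
      refine ⟨b.repr (Submodule.Quotient.mk (p := Submodule.torsion R M) y) i, ?_⟩
      have hmkeq : r • Submodule.Quotient.mk (p := Submodule.torsion R M) y
          = Submodule.Quotient.mk (p := Submodule.torsion R M) x := by
        rw [← Submodule.Quotient.mk_smul, hy]
      rw [← hmkeq, map_smul, Finsupp.smul_apply, smul_eq_mul]
    apply b.repr.injective
    ext i
    simpa using hcoord i
  have hxT : x ∈ Submodule.torsion R M := (Submodule.Quotient.mk_eq_zero _).mp hxQ
  -- torsion submodule has finite exponent
  haveI : IsNoetherian R M := isNoetherian_of_isNoetherianRing_of_finite R M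
  obtain ⟨s, hs⟩ := IsNoetherian.noetherian (Submodule.torsion R M)
  have hann : ∀ t : M, t ∈ (s : Set M) → ∃ a : R, a ≠ 0 ∧ a • t = 0 := by
    intro t ht
    have : t ∈ Submodule.torsion R M := hs ▸ Submodule.subset_span ht
    obtain ⟨a, ha⟩ := (Submodule.mem_torsion_iff (R := R) t).mp this
    exact ⟨(a : R), nonZeroDivisors.coe_ne_zero a, ha⟩
  choose! a hane hazero using hann
  set e : R := ∏ t ∈ s, a t with he
  have hene : e ≠ 0 := Finset.prod_ne_zero_iff.mpr (fun t ht => hane t ht)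
  have hkill : ∀ z ∈ Submodule.torsion R M, e • z = 0 := by
    intro z hz
    rw [← hs] at hz
    induction hz using Submodule.span_induction with
    | mem t ht =>
        obtain ⟨c, hc⟩ : a t ∣ e := Finset.dvd_prod_of_mem a ht
        rw [he] at hc ⊢
        rw [hc, mul_comm, mul_smul, hazero t ht, smul_zero]
    | zero => simp
    | add u v _ _ hu hv => rw [smul_add, hu, hv, add_zero]
    | smul r u _ hu => rw [smul_comm, hu, smul_zero]
  obtain ⟨y, hy⟩ := hx e hene
  have hyT : y ∈ Submodule.torsion R M := by
    have h1 : e • Submodule.Quotient.mk (p := Submodule.torsion R M) y = 0 := by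
      rw [← Submodule.Quotient.mk_smul, hy, hxQ]
    rcases smul_eq_zero.mp h1 with h | h
    · exact absurd h hene
    · exact (Submodule.Quotient.mk_eq_zero _).mp h
  rw [← hy]
  exact hkill y hyT

section basic
variable {I J 𝒮 : Set (H →L[ℂ] H)}

theorem IsBHIdeal.smul_mem (hI : IsBHIdeal I) (c : ℂ) {x} (hx : x ∈ I) : c • x ∈ I := by
  have := (hI.2.2.2 (c • (1 : H →L[ℂ] H)) x hx).1
  rwa [smul_mul_assoc, one_mul] at this

theorem IsBHIdeal.real_smul_mem (hI : IsBHIdeal I) (r : ℝ) {x} (hx : x ∈ I) : r • x ∈ I := by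
  have h := hI.smul_mem (r : ℂ) hx
  have hcast : ((r : ℂ)) • x = r • x := by
    rw [← Complex.coe_algebraMap]
    exact algebraMap_smul ℂ r x
  rwa [hcast] at h

theorem IsBHIdeal.zsmul_mem (hI : IsBHIdeal I) (n : ℤ) {x} (hx : x ∈ I) : n • x ∈ I := by
  have h := hI.smul_mem (n : ℂ) hx
  rwa [Int.cast_smul_eq_zsmul] at h

theorem IsBHIdeal.sum_mem (hI : IsBHIdeal I) {n : ℕ} {f : Fin n → (H →L[ℂ] H)}
    (hf : ∀ i, f i ∈ I) : ∑ i, f i ∈ I := by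
  classical
  refine Finset.sum_induction f (· ∈ I) (fun a b ha hb => hI.2.1 a ha b hb) hI.1 ?_
  exact fun i _ => hf i

theorem isBHIdeal_genBH : IsBHIdeal (genBH 𝒮) := by
  refine ⟨?_, ?_, ?_, ?_⟩
  · exact fun I hI => hI.1.1
  · intro x hx y hy I hI
    exact hI.1.2.1 x (hx I hI) y (hy I hI)
  · intro x hx I hI
    exact hI.1.2.2.1 x (hx I hI)
  · intro A x hx
    constructor
    · intro I hI; exact (hI.1.2.2.2 A x (hx I hI)).1
    · intro I hI; exact (hI.1.2.2.2 A x (hx I hI)).2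

theorem subset_genBH : 𝒮 ⊆ genBH 𝒮 := fun x hx I hI => hI.2 hx

theorem genBH_minimal (hI : IsBHIdeal I) (h𝒮 : 𝒮 ⊆ I) : genBH 𝒮 ⊆ I :=
  Set.sInter_subset_of_mem ⟨hI, h𝒮⟩

end basic

section star
variable {I J 𝒮 : Set (H →L[ℂ] H)}

theorem IsBHIdeal.star_mem (hI : IsBHIdeal I) {x} (hx : x ∈ I) : star x ∈ I := by
  obtain ⟨U, hU⟩ := exists_polar x
  have : star x = star U * x * star U := by
    conv_lhs => rw [hU]
    simp only [star_mul]
    rw [star_star, mul_assoc]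
  rw [this]
  exact (hI.2.2.2 (star U) _ (hI.2.2.2 (star U) x hx).2).1

theorem JGen_zero : (0 : H →L[ℂ] H) ∈ JGen J 𝒮 :=
  ⟨0, ![], ![], fun i => i.elim0, by simp⟩

theorem JGen_single {A X : H →L[ℂ] H} (hA : A ∈ J) (hX : X ∈ genBH 𝒮) :
    A * X ∈ JGen J 𝒮 :=
  ⟨1, ![A], ![X], fun i => by fin_cases i <;> exact ⟨hA, hX⟩, by simp⟩

theorem JGen_add {x y : H →L[ℂ] H} (hx : x ∈ JGen J 𝒮) (hy : y ∈ JGen J 𝒮) :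
    x + y ∈ JGen J 𝒮 := by
  obtain ⟨n, A, X, hAX, rfl⟩ := hx
  obtain ⟨m, B, Y, hBY, rfl⟩ := hy
  refine ⟨n + m, Fin.append A B, Fin.append X Y, ?_, ?_⟩
  · intro i
    refine Fin.addCases (fun i => ?_) (fun i => ?_) i
    · rw [Fin.append_left, Fin.append_left]; exact hAX i
    · rw [Fin.append_right, Fin.append_right]; exact hBY i
  · rw [Fin.sum_univ_add]
    congr 1 <;> apply Finset.sum_congr rfl <;> intro i _ <;>
      simp [Fin.append_left, Fin.append_right]

end star

section jgen
variable {J 𝒮 : Set (H →L[ℂ] H)}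

theorem JGen_smul (hJ : IsBHIdeal J) (c : ℂ) {x : H →L[ℂ] H} (hx : x ∈ JGen J 𝒮) :
    c • x ∈ JGen J 𝒮 := by
  obtain ⟨n, A, X, hAX, rfl⟩ := hx
  refine ⟨n, fun i => c • A i, X, fun i => ⟨hJ.smul_mem c (hAX i).1, (hAX i).2⟩, ?_⟩
  rw [Finset.smul_sum]
  exact Finset.sum_congr rfl fun i _ => by rw [smul_mul_assoc]

theorem JGen_neg (hJ : IsBHIdeal J) {x : H →L[ℂ] H} (hx : x ∈ JGen J 𝒮) :
    -x ∈ JGen J 𝒮 := by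
  have := JGen_smul (𝒮 := 𝒮) hJ (-1) hx
  rwa [neg_one_smul] at this

theorem JGen_mul_left (A : H →L[ℂ] H) {x : H →L[ℂ] H} (hx : x ∈ JGen J 𝒮) (hJ : IsBHIdeal J) :
    A * x ∈ JGen J 𝒮 := by
  obtain ⟨n, B, X, hBX, rfl⟩ := hx
  refine ⟨n, fun i => A * B i, X, fun i => ⟨(hJ.2.2.2 A _ (hBX i).1).1, (hBX i).2⟩, ?_⟩
  rw [Finset.mul_sum]
  exact Finset.sum_congr rfl fun i _ => by rw [mul_assoc]

theorem JGen_mul_right (A : H →L[ℂ] H) {x : H →L[ℂ] H} (hx : x ∈ JGen J 𝒮) :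
    x * A ∈ JGen J 𝒮 := by
  obtain ⟨n, B, X, hBX, rfl⟩ := hx
  refine ⟨n, B, fun i => X i * A, fun i => ⟨(hBX i).1,
    (isBHIdeal_genBH.2.2.2 A _ (hBX i).2).2⟩, ?_⟩
  rw [Finset.sum_mul]
  exact Finset.sum_congr rfl fun i _ => by rw [mul_assoc]

theorem isBHIdeal_JGen (hJ : IsBHIdeal J) : IsBHIdeal (JGen J 𝒮) :=
  ⟨JGen_zero, fun x hx y hy => JGen_add hx hy, fun x hx => JGen_neg hJ hx,
    fun A x hx => ⟨JGen_mul_left A hx hJ, JGen_mul_right A hx⟩⟩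

theorem JGen_subset_genBH : JGen J 𝒮 ⊆ genBH 𝒮 := by
  rintro T ⟨n, A, X, hAX, rfl⟩
  exact isBHIdeal_genBH.sum_mem fun i => (isBHIdeal_genBH.2.2.2 (A i) _ (hAX i).2).1

theorem JGen_subset_J (hJ : IsBHIdeal J) : JGen J 𝒮 ⊆ J := by
  rintro T ⟨n, A, X, hAX, rfl⟩
  exact hJ.sum_mem fun i => (hJ.2.2.2 (X i) _ (hAX i).1).2

/-- Key commutation lemma: `(𝒮)·J ⊆ J(𝒮)`. -/
theorem mul_right_mem_JGen (hJ : IsBHIdeal J) {X B : H →L[ℂ] H}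
    (hX : X ∈ genBH 𝒮) (hB : B ∈ J) : X * B ∈ JGen J 𝒮 := by
  obtain ⟨U, hU⟩ := exists_polar (X * B)
  have h1 : X * B = (U * star B) * (star X * U) := by
    conv_lhs => rw [hU, star_mul]
    rw [mul_assoc, mul_assoc, mul_assoc]
  rw [h1]
  exact JGen_single (hJ.2.2.2 U _ (hJ.star_mem hB)).1
    ((isBHIdeal_genBH.2.2.2 U _ (isBHIdeal_genBH.star_mem hX)).2)

end jgen

section jgen2
variable {J 𝒮 : Set (H →L[ℂ] H)}

theorem JGen_real_smul (hJ : IsBHIdeal J) (r : ℝ) {x : H →L[ℂ] H} (hx : x ∈ JGen J 𝒮) :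
    r • x ∈ JGen J 𝒮 := by
  have h := JGen_smul (𝒮 := 𝒮) hJ (r : ℂ) hx
  have hcast : ((r : ℂ)) • x = r • x := by
    rw [← Complex.coe_algebraMap]
    exact algebraMap_smul ℂ r x
  rwa [hcast] at h

theorem JGen_zsmul (hJ : IsBHIdeal J) (n : ℤ) {x : H →L[ℂ] H} (hx : x ∈ JGen J 𝒮) :
    n • x ∈ JGen J 𝒮 := by
  have h := JGen_smul (𝒮 := 𝒮) hJ (n : ℂ) hx
  rwa [Int.cast_smul_eq_zsmul] at h

theorem JGen_sum (hJ : IsBHIdeal J) {n : ℕ} {f : Fin n → (H →L[ℂ] H)}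
    (hf : ∀ i, f i ∈ JGen J 𝒮) : ∑ i, f i ∈ JGen J 𝒮 := by
  classical
  refine Finset.sum_induction f (· ∈ JGen J 𝒮) (fun a b ha hb => JGen_add ha hb) JGen_zero ?_
  exact fun i _ => hf i

theorem JGen_sub (hJ : IsBHIdeal J) {x y : H →L[ℂ] H} (hx : x ∈ JGen J 𝒮)
    (hy : y ∈ JGen J 𝒮) : x - y ∈ JGen J 𝒮 := by
  rw [sub_eq_add_neg]
  exact JGen_add hx (JGen_neg hJ hy)

end jgen2

/-- if `⟨𝒮⟩_J = (𝒮)_J^ℝ` or `⟨𝒮⟩_J = (𝒮)_J`, then `(𝒮)` is `J`-soft. -/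
theorem stmt_19 (J : Set (H →L[ℂ] H)) (hJ : IsBHIdeal J)
    (N : ℕ) (S : Fin N → (H →L[ℂ] H)) (hS : ∀ j, S j ∈ J)
    (h : genSub J (Set.range S) = genReal J (Set.range S) ∨
         genSub J (Set.range S) = genLin J (Set.range S)) :
    genBH (Set.range S) = JGen J (Set.range S) := by
  classical
  set 𝒮 : Set (H →L[ℂ] H) := Set.range S with h𝒮
  have hSgen : ∀ j, S j ∈ genBH 𝒮 := fun j => subset_genBH ⟨j, rfl⟩
  -- the combination map ν
  set ν : (Fin N → ℤ) → (H →L[ℂ] H) := fun n => ∑ k, n k • S k with hν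
  have hν_sub : ∀ n m, ν (n - m) = ν n - ν m := by
    intro n m
    rw [hν, ← Finset.sum_sub_distrib]
    exact Finset.sum_congr rfl fun k _ => by rw [Pi.sub_apply, sub_smul]
  have hν_zsmul : ∀ (c : ℤ) n, ν (c • n) = c • ν n := by
    intro c n
    rw [hν, Finset.smul_sum]
    exact Finset.sum_congr rfl fun k _ => by rw [Pi.smul_apply, smul_eq_mul, mul_smul]
  have hν_single : ∀ j, ν (Pi.single j 1) = S j := by
    intro j
    show (∑ k, (Pi.single j (1:ℤ) : Fin N → ℤ) k • S k) = S j
    rw [Finset.sum_eq_single j]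
    · simp
    · intro k _ hk
      rw [Pi.single_eq_of_ne hk, zero_smul]
    · intro hj; exact absurd (Finset.mem_univ j) hj
  have hν_mem_J : ∀ n, ν n ∈ J := fun n => hJ.sum_mem fun k => hJ.zsmul_mem _ (hS k)
  -- the J-ideal ℤ𝒮 + J(𝒮)
  set IStar : Set (H →L[ℂ] H) := {T | ∃ n : Fin N → ℤ, T - ν n ∈ JGen J 𝒮} with hIStar
  have hsub : IsSubideal J IStar := by
    refine ⟨?_, ⟨0, by simpa [hν] using JGen_zero⟩, ?_, ?_, ?_⟩
    · rintro T ⟨n, hn⟩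
      have h1 : T = (T - ν n) + ν n := by abel
      rw [h1]
      exact hJ.2.1 _ (JGen_subset_J hJ hn) _ (hν_mem_J n)
    · rintro x ⟨n, hn⟩ y ⟨m, hm⟩
      refine ⟨n + m, ?_⟩
      have : x + y - ν (n + m) = (x - ν n) + (y - ν m) := by
        have : ν (n + m) = ν n + ν m := by
          have := hν_sub (n + m) m
          simp only [add_sub_cancel_right] at this
          rw [this]; abel
        rw [this]; abel
      rw [this]
      exact JGen_add hn hm
    · rintro x ⟨n, hn⟩
      refine ⟨-n, ?_⟩
      have : -x - ν (-n) = -(x - ν n) := by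
        have h0 : ν (0 - n) = ν 0 - ν n := hν_sub 0 n
        simp only [zero_sub] at h0
        rw [h0]
        have : ν 0 = 0 := by simp [hν]
        rw [this]; abel
      rw [this]
      exact JGen_neg hJ hn
    · rintro A hA x ⟨n, hn⟩
      constructor
      · refine ⟨0, ?_⟩
        have hν0 : ν 0 = 0 := by simp [hν]
        rw [hν0, sub_zero]
        have h1 : A * x = A * (x - ν n) + A * ν n := by noncomm_ring
        rw [h1]
        refine JGen_add (JGen_mul_left A hn hJ) ?_
        have : A * ν n = ∑ k, n k • (A * S k) := by
          rw [hν, Finset.mul_sum]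
          exact Finset.sum_congr rfl fun k _ => by
            rw [mul_smul_comm]
        rw [this]
        exact JGen_sum hJ fun k => JGen_zsmul hJ _ (JGen_single hA (hSgen k))
      · refine ⟨0, ?_⟩
        have hν0 : ν 0 = 0 := by simp [hν]
        rw [hν0, sub_zero]
        have h1 : x * A = (x - ν n) * A + ν n * A := by noncomm_ring
        rw [h1]
        refine JGen_add (JGen_mul_right A hn) ?_
        have : ν n * A = ∑ k, n k • (S k * A) := by
          rw [hν, Finset.sum_mul]
          exact Finset.sum_congr rfl fun k _ => by rw [smul_mul_assoc]
        rw [this]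
        exact JGen_sum hJ fun k => JGen_zsmul hJ _ (mul_right_mem_JGen hJ (hSgen k) hA)
  have hrange : 𝒮 ⊆ IStar := by
    rintro _ ⟨j, rfl⟩
    exact ⟨Pi.single j 1, by rw [hν_single j]; simpa using JGen_zero⟩
  have hgenSub : genSub J 𝒮 ⊆ IStar := Set.sInter_subset_of_mem ⟨hsub, hrange⟩
  -- divisibility representations
  have hq : ∀ (j : Fin N) (q : ℕ), 0 < q →
      ∃ n : Fin N → ℤ, S j - (q : ℤ) • ν n ∈ JGen J 𝒮 := by
    intro j q hq0
    have hqR : ((q : ℝ)) ≠ 0 := by positivity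
    have hqC : ((q : ℂ)) ≠ 0 := Nat.cast_ne_zero.mpr (by omega)
    have hw : ∃ w, w ∈ genSub J 𝒮 ∧ (q : ℤ) • w = S j := by
      rcases h with hre | hlin
      · refine ⟨((q : ℝ))⁻¹ • S j, ?_, ?_⟩
        · rw [hre]
          intro I hI
          exact hI.1.2 _ _ (hI.2 ⟨j, rfl⟩)
        · rw [← Int.cast_smul_eq_zsmul ℝ]
          rw [smul_smul]
          rw [show (((q : ℤ) : ℝ)) = (q : ℝ) by push_cast; ring]
          rw [mul_inv_cancel₀ hqR, one_smul]
      · refine ⟨((q : ℂ))⁻¹ • S j, ?_, ?_⟩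
        · rw [hlin]
          intro I hI
          exact hI.1.2 _ _ (hI.2 ⟨j, rfl⟩)
        · rw [← Int.cast_smul_eq_zsmul ℂ]
          rw [smul_smul]
          rw [show (((q : ℤ) : ℂ)) = (q : ℂ) by push_cast; ring]
          rw [mul_inv_cancel₀ hqC, one_smul]
    obtain ⟨w, hwmem, hwq⟩ := hw
    obtain ⟨n, hn⟩ := hgenSub hwmem
    refine ⟨n, ?_⟩
    have h2 := JGen_zsmul hJ (q : ℤ) hn
    rw [smul_sub, hwq] at h2
    exact h2
  -- the lattice of coefficients
  set Λ : Submodule ℤ (Fin N → ℤ) :=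
    { carrier := {n | ν n ∈ JGen J 𝒮}
      add_mem' := by
        intro a b ha hb
        have : ν (a + b) = ν a + ν b := by
          have := hν_sub (a + b) b
          simp only [add_sub_cancel_right] at this
          rw [this]; abel
        simp only [Set.mem_setOf_eq] at *
        rw [this]
        exact JGen_add ha hb
      zero_mem' := by
        simp only [Set.mem_setOf_eq]
        have : ν 0 = 0 := by simp [hν]
        rw [this]; exact JGen_zero
      smul_mem' := by
        intro c n hn
        simp only [Set.mem_setOf_eq] at *
        rw [hν_zsmul]
        exact JGen_zsmul hJ c hn } with hΛ
  -- S j ∈ JGen for every j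
  have hSj : ∀ j, S j ∈ JGen J 𝒮 := by
    intro j
    have hmk : Submodule.Quotient.mk (p := Λ) (Pi.single j 1) = 0 := by
      refine div_fg_zero (R := ℤ) ?_ _ ?_
      · intro c hc
        by_contra hcne
        have hd := hc ((c.natAbs + 1 : ℕ) : ℤ) (by positivity)
        have hle := Int.le_of_dvd (by positivity : (0:ℤ) < |c|) ((dvd_abs _ _).mpr hd)
        rw [Int.abs_eq_natAbs] at hle
        omega
      · intro r hr
        obtain ⟨n, hn⟩ := hq j r.natAbs (Int.natAbs_pos.mpr hr)
        have hmem : Pi.single j 1 - (r.natAbs : ℤ) • n ∈ Λ := by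
          show ν _ ∈ JGen J 𝒮
          rw [hν_sub, hν_zsmul, hν_single]
          exact hn
        have heq : Submodule.Quotient.mk (p := Λ) (Pi.single j 1)
            = ((r.natAbs : ℤ)) • Submodule.Quotient.mk (p := Λ) n := by
          rw [← Submodule.Quotient.mk_smul]
          exact (Submodule.Quotient.eq Λ).mpr hmem
        rcases Int.natAbs_eq r with hr' | hr'
        · exact ⟨Submodule.Quotient.mk (p := Λ) n, by rw [← hr'] at heq; exact heq.symm⟩
        · refine ⟨-(Submodule.Quotient.mk (p := Λ) n), ?_⟩
          rw [hr', neg_smul, smul_neg, neg_neg]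
          exact heq.symm
    have hmemΛ : Pi.single j 1 ∈ Λ := (Submodule.Quotient.mk_eq_zero _).mp hmk
    have : ν (Pi.single j 1) ∈ JGen J 𝒮 := hmemΛ
    rwa [hν_single] at this
  -- conclusion
  apply Set.Subset.antisymm
  · exact genBH_minimal (isBHIdeal_JGen hJ) (by rintro _ ⟨j, rfl⟩; exact hSj j)
  · exact JGen_subset_genBH
end
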